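/- Let n = 2k be even. There is no fixed-point-free involution π ∈ S_n (i.e., π² = id and π has no fixed points) with maj(π) = k + 1. -/

import Mathlib

/-- The major index of a permutation of `Fin n`: the sum of all positions
`i ∈ {1,…,n-1}` (1-indexed) such that `π(i) > π(i+1)`. -/
def majPerm {n : ℕ} (π : Equiv.Perm (Fin n)) : ℕ :=
  ∑ i ∈ Finset.range n, if h : i + 1 < n then
    (if π ⟨i + 1, h⟩ < π ⟨i, Nat.lt_of_succ_lt h⟩ then i + 1 else 0) else 0

/-- If a sequence has no descent between positions `s` and `t`, and is injective
below `n`, then it increases by at least `t - s` from `s` to `t`. -/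
lemma chainP {n : ℕ} (P : ℕ → ℕ)
    (hinj : ∀ i j, i < n → j < n → P i = P j → i = j) :
    ∀ (t : ℕ), t < n → ∀ s, s ≤ t →
      (∀ i, s ≤ i → i + 1 ≤ t → ¬ (P (i + 1) < P i)) →
      P s + (t - s) ≤ P t := by
  intro t
  induction t with
  | zero =>
      intro _ s hs _
      interval_cases s
      omega
  | succ m ih =>
      intro ht s hs H
      rcases Nat.lt_or_ge s (m + 1) with hlt | hge
      · have h1 := ih (by omega) s (by omega) (fun i a b => H i a (by omega))
        have h2 := H m (by omega) (le_refl _)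
        have h3 : P m ≠ P (m + 1) := by
          intro hc
          have := hinj m (m + 1) (by omega) ht hc
          omega
        omega
      · have : s = m + 1 := by omega
        subst this
        omega

theorem no_fpf_involution_maj_k_add_one (n k : ℕ) (h : n = 2 * k) :
    ¬ ∃ π : Equiv.Perm (Fin n), π * π = 1 ∧ (∀ i, π i ≠ i) ∧ majPerm π = k + 1 := by
  subst h
  rintro ⟨π, hinv, hfpf, hmaj⟩
  -- dispose of k = 0
  rcases Nat.eq_zero_or_pos k with rfl | hk1
  · simp [majPerm] at hmaj
  -- the value sequence as a function ℕ → ℕ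
  set P : ℕ → ℕ := fun i => if h : i < 2 * k then (π ⟨i, h⟩).val else 0 with hPdef
  have hP_lt : ∀ i, i < 2 * k → P i < 2 * k := by
    intro i hi
    simp only [hPdef, dif_pos hi]
    exact (π ⟨i, hi⟩).isLt
  have hP_inj : ∀ i j, i < 2 * k → j < 2 * k → P i = P j → i = j := by
    intro i j hi hj hij
    simp only [hPdef, dif_pos hi, dif_pos hj] at hij
    have := π.injective (Fin.val_injective hij)
    simpa [Fin.ext_iff] using this
  have hinv' : ∀ x : Fin (2 * k), π (π x) = x := by
    intro x
    have := congrArg (fun σ : Equiv.Perm (Fin (2 * k)) => σ x) hinv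
    simpa using this
  have hP_inv : ∀ i, i < 2 * k → P (P i) = i := by
    intro i hi
    have h1 : P i < 2 * k := hP_lt i hi
    have key : π ⟨P i, h1⟩ = ⟨i, hi⟩ := by
      have h2 : (⟨P i, h1⟩ : Fin (2 * k)) = π ⟨i, hi⟩ := by
        apply Fin.ext
        simp [hPdef, hi]
      rw [h2, hinv']
    calc P (P i) = (π ⟨P i, h1⟩).val := by
          show (if h : P i < 2 * k then (π ⟨P i, h⟩).val else 0) = _
          rw [dif_pos h1]
      _ = i := by rw [key]
  have hP_ne : ∀ i, i < 2 * k → P i ≠ i := by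
    intro i hi hc
    have : π ⟨i, hi⟩ = ⟨i, hi⟩ := by
      apply Fin.ext
      simpa only [hPdef, dif_pos hi] using hc
    exact hfpf _ this
  -- rewrite majPerm in terms of P
  set g : ℕ → ℕ := fun i => if i + 1 < 2 * k ∧ P (i + 1) < P i then i + 1 else 0
    with hgdef
  have hmaj' : ∑ i ∈ Finset.range (2 * k), g i = k + 1 := by
    rw [← hmaj]
    unfold majPerm
    apply Finset.sum_congr rfl
    intro i _
    by_cases h1 : i + 1 < 2 * k
    · have h0 : i < 2 * k := Nat.lt_of_succ_lt h1
      simp only [hgdef, hPdef, dif_pos h1, dif_pos h0, Fin.lt_def]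
      by_cases hd : (π ⟨i + 1, h1⟩).val < (π ⟨i, h0⟩).val
      · rw [if_pos hd, if_pos ⟨h1, hd⟩]
      · rw [if_neg hd, if_neg (by tauto)]
    · simp [hgdef, h1]
  -- each term is at most k+1
  have hterm : ∀ d, d < 2 * k → g d ≤ k + 1 := by
    intro d hd
    rw [← hmaj']
    exact Finset.single_le_sum (fun i _ => Nat.zero_le (g i)) (Finset.mem_range.mpr hd)
  -- the position a of the maximum value is a descent
  set a : ℕ := P (2 * k - 1) with hadef
  have h2k1 : 2 * k - 1 < 2 * k := by omega
  have ha_lt : a < 2 * k := hP_lt _ h2k1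
  have haP : P a = 2 * k - 1 := hP_inv _ h2k1
  have ha_ne : a ≠ 2 * k - 1 := fun hc => hP_ne _ h2k1 (by omega)
  have ha1 : a + 1 < 2 * k := by omega
  have ha_desc : P (a + 1) < P a := by
    have h1 : P (a + 1) < 2 * k := hP_lt _ ha1
    have h2 : P (a + 1) ≠ 2 * k - 1 := by
      intro hc
      have := hP_inj (a + 1) a ha1 ha_lt (by omega)
      omega
    omega
  -- the position b of value 0: b - 1 is a descent
  set b : ℕ := P 0 with hbdef
  have h0lt : 0 < 2 * k := by omega
  have hb_lt : b < 2 * k := hP_lt _ h0lt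
  have hbP : P b = 0 := hP_inv _ h0lt
  have hb_ne : b ≠ 0 := fun hc => hP_ne 0 h0lt (by omega)
  have hb_desc : P (b - 1 + 1) < P (b - 1) := by
    have he : b - 1 + 1 = b := by omega
    rw [he, hbP]
    have h1 : b - 1 < 2 * k := by omega
    have h2 : P (b - 1) ≠ 0 := by
      intro hc
      have := hP_inj (b - 1) b h1 hb_lt (by rw [hbP, hc])
      omega
    omega
  -- descent at index d gives g d = d + 1
  have hgd : ∀ d, d + 1 < 2 * k → P (d + 1) < P d → g d = d + 1 := by
    intro d h1 h2
    simp [hgdef, h1, h2]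
  -- Lemma A: there is a descent at some index ≥ k - 1
  have hbig : ∃ d, k - 1 ≤ d ∧ d + 1 < 2 * k ∧ P (d + 1) < P d := by
    by_contra hno
    push_neg at hno
    have hchain := chainP P hP_inj (2 * k - 1) h2k1 (k - 1) (by omega)
      (fun i hi hi2 => not_lt.mpr (hno i hi (by omega)))
    -- P (2k-1) = a ≥ P(k-1) + k ≥ k, so a ≥ k-1, so hno kills the descent at a
    exact absurd ha_desc (not_lt.mpr (hno a (by omega) ha1))
  obtain ⟨d, hd1, hd2, hd3⟩ := hbig
  have hgd' : g d = d + 1 := hgd d hd2 hd3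
  have hdle : d + 1 ≤ k + 1 := by rw [← hgd']; exact hterm d (by omega)
  have hdmem : d ∈ Finset.range (2 * k) := Finset.mem_range.mpr (by omega)
  have hsplit : g d + ∑ i ∈ (Finset.range (2 * k)).erase d, g i = k + 1 := by
    rw [Finset.add_sum_erase _ g hdmem, hmaj']
  have hdval : d = k - 1 ∨ d = k := by omega
  rcases hdval with hdk | hdk
  · -- Case d = k - 1 : descent set is {0, k-1} (1-indexed {1, k})
    subst hdk
    have hk1' : k - 1 + 1 = k := by omega
    rw [hgd', hk1'] at hsplit
    have hres : ∑ i ∈ (Finset.range (2 * k)).erase (k - 1), g i = 1 := by omega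
    -- all other descents must equal index 0
    have hsmall : ∀ i ∈ (Finset.range (2 * k)).erase (k - 1), g i ≤ 1 := by
      intro i hi
      rw [← hres]
      exact Finset.single_le_sum (fun j _ => Nat.zero_le (g j)) hi
    have hz : ∀ i, i ≠ k - 1 → i ≠ 0 → i + 1 < 2 * k → ¬ (P (i + 1) < P i) := by
      intro i hne h0 h1 hdes
      have hmem : i ∈ (Finset.range (2 * k)).erase (k - 1) :=
        Finset.mem_erase.mpr ⟨hne, Finset.mem_range.mpr (by omega)⟩
      have := hsmall i hmem
      rw [hgd i h1 hdes] at this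
      omega
    -- the residual 1 must come from a descent at index 0, hence k ≥ 2
    have hex : ∃ i ∈ (Finset.range (2 * k)).erase (k - 1), g i ≠ 0 := by
      by_contra hc
      push_neg at hc
      have : ∑ i ∈ (Finset.range (2 * k)).erase (k - 1), g i = 0 :=
        Finset.sum_eq_zero hc
      omega
    obtain ⟨i0, hi0mem, hi0⟩ := hex
    have hi0ne : i0 ≠ k - 1 := (Finset.mem_erase.mp hi0mem).1
    have hcond : i0 + 1 < 2 * k ∧ P (i0 + 1) < P i0 := by
      by_contra hc
      simp only [hgdef] at hi0
      rw [if_neg hc] at hi0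
      exact hi0 rfl
    have hi0z : i0 = 0 := by
      have h1 := hsmall i0 hi0mem
      rw [hgd i0 hcond.1 hcond.2] at h1
      omega
    subst hi0z
    have hk2 : 2 ≤ k := by omega
    have hdes0 : P 1 < P 0 := hcond.2
    -- a ∈ {0, k - 1}
    have ha01 : a = 0 ∨ a = k - 1 := by
      by_contra hc
      push_neg at hc
      exact hz a hc.2 hc.1 ha1 ha_desc
    -- chain on [k, 2k-1]
    have hchain1 := chainP P hP_inj (2 * k - 1) h2k1 k (by omega)
      (fun i hi hi2 => hz i (by omega) (by omega) (by omega))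
    rcases ha01 with ha0 | hak
    · -- a = 0 : P(2k-1) = 0, contradiction with chain
      have hP2k : P (2 * k - 1) = 0 := by rw [← hadef]; exact ha0
      omega
    · -- a = k - 1 : P(k-1) = 2k-1, P(2k-1) = k-1
      have hPa : P (2 * k - 1) = k - 1 := by rw [← hadef]; exact hak
      -- b - 1 ∈ {0, k-1}
      have hb1 : b - 1 + 1 < 2 * k := by omega
      have hb01 : b - 1 = 0 ∨ b - 1 = k - 1 := by
        by_contra hc
        push_neg at hc
        exact hz (b - 1) hc.2 hc.1 hb1 hb_desc
      rcases hb01 with hb0 | hbk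
      · -- b = 1 : P 1 = 0; chain forces P k = 0 too, contradiction with injectivity
        have hbv : b = 1 := by omega
        have hP10 : P 1 = 0 := by rw [← hbv]; exact hbP
        have hPk0 : P k = 0 := by omega
        have := hP_inj k 1 (by omega) (by omega) (by omega)
        omega
      · -- b = k : P k = 0, P 0 = k; then P (k+1) = 1, so P 1 = k+1 > P 0 = k,
        -- contradicting descent at 0
        have hbv : b = k := by omega
        have hPk0 : P k = 0 := by rw [← hbv]; exact hbP
        have hP0k : P 0 = k := by rw [← hbdef]; exact hbv
        have hchain2 := chainP P hP_inj (2 * k - 1) h2k1 (k + 1) (by omega)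
          (fun i hi hi2 => hz i (by omega) (by omega) (by omega))
        have hchain3 := chainP P hP_inj (k + 1) (by omega) k (by omega)
          (fun i hi hi2 => hz i (by omega) (by omega) (by omega))
        have hPk1 : P (k + 1) = 1 := by omega
        have hP1 : P 1 = k + 1 := by
          have h5 := hP_inv (k + 1) (by omega)
          rw [hPk1] at h5
          exact h5
        omega
  · -- Case d = k : single descent at index k (1-indexed k+1)
    rw [hdk] at hgd' hsplit hd2 hd3
    have hres : ∑ i ∈ (Finset.range (2 * k)).erase k, g i = 0 := by
      rw [hgd'] at hsplit
      omega
    have hz : ∀ i, i ≠ k → i + 1 < 2 * k → ¬ (P (i + 1) < P i) := by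
      intro i hne h1 hdes
      have hmem : i ∈ (Finset.range (2 * k)).erase k :=
        Finset.mem_erase.mpr ⟨hne, Finset.mem_range.mpr (by omega)⟩
      have := (Finset.sum_eq_zero_iff.mp hres) i hmem
      rw [hgd i h1 hdes] at this
      omega
    -- a = k
    have hak : a = k := by
      by_contra hc
      exact hz a hc ha1 ha_desc
    -- b - 1 = k, so b = k + 1
    have hb1 : b - 1 + 1 < 2 * k := by omega
    have hbk : b - 1 = k := by
      by_contra hc
      exact hz (b - 1) hc hb1 hb_desc
    have hbv : b = k + 1 := by omega
    have hP0 : P 0 = k + 1 := by rw [← hbdef]; exact hbv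
    have hPk : P k = 2 * k - 1 := by
      have : P a = 2 * k - 1 := haP
      rw [hak] at this
      exact this
    -- chain on [0, k] : P k ≥ P 0 + k = 2k + 1 > 2k - 1, contradiction
    have hchain := chainP P hP_inj k (by omega) 0 (by omega)
      (fun i hi hi2 => hz i (by omega) (by omega))
    omega
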